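/- Let R be a relation on ℤ that is first-order definable over (ℤ;<) with qe-degree q (i.e., R is defined by a quantifier-free formula whose atomic subformulas are of the form x < y + k or x ≤ y + k with |k| ≤ q). Let Φ be a conjunction of atoms R(y₁,...,y_n) over n variables. Then Φ is satisfiable over ℤ if and only if Φ is satisfiable with all variables taking values in the interval {1, ..., (q+1)·n}. -/

import Mathlib

/-- Quantifier-free formulas over `(ℤ;<)` with atoms `x_i < x_j + k` and `x_i ≤ x_j + k`. -/
inductive QF (n : ℕ) : Type
  | lt (i j : Fin n) (k : ℤ) : QF n
  | le (i j : Fin n) (k : ℤ) : QF n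
  | and (φ ψ : QF n) : QF n
  | or (φ ψ : QF n) : QF n
  | not (φ : QF n) : QF n

def QF.eval {n : ℕ} : QF n → (Fin n → ℤ) → Prop
  | .lt i j k, v => v i < v j + k
  | .le i j k, v => v i ≤ v j + k
  | .and φ ψ, v => φ.eval v ∧ ψ.eval v
  | .or φ ψ, v => φ.eval v ∨ ψ.eval v
  | .not φ, v => ¬ φ.eval v

/-- All constants in the formula have absolute value at most `q` (qe-degree ≤ q). -/
def QF.DegLe {n : ℕ} (q : ℕ) : QF n → Prop
  | .lt _ _ k => |k| ≤ (q : ℤ)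
  | .le _ _ k => |k| ≤ (q : ℤ)
  | .and φ ψ => φ.DegLe q ∧ ψ.DegLe q
  | .or φ ψ => φ.DegLe q ∧ ψ.DegLe q
  | .not φ => φ.DegLe q

namespace Stmt4Aux

/-- The set of "covered" integers below `v i`. -/
noncomputable def U {n : ℕ} (B : ℤ) (v : Fin n → ℤ) (i : Fin n) : Finset ℤ :=
  Finset.univ.biUnion (fun j => Finset.Ico (v j) (min (v j + B) (v i)))

lemma mem_U {n : ℕ} {B : ℤ} {v : Fin n → ℤ} {i : Fin n} {m : ℤ} :
    m ∈ U B v i ↔ ∃ j, v j ≤ m ∧ m < v j + B ∧ m < v i := by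
  simp [U, Finset.mem_biUnion, Finset.mem_Ico, lt_min_iff, and_assoc]

/-- The compressed assignment. -/
noncomputable def w {n : ℕ} (B : ℤ) (v : Fin n → ℤ) (i : Fin n) : ℤ := 1 + (U B v i).card

lemma U_subset {n : ℕ} {B : ℤ} {v : Fin n → ℤ} {i i' : Fin n} (h : v i ≤ v i') :
    U B v i ⊆ U B v i' := by
  intro m hm
  rw [mem_U] at hm ⊢
  obtain ⟨j, h1, h2, h3⟩ := hm
  exact ⟨j, h1, h2, lt_of_lt_of_le h3 h⟩

lemma w_sub_le {n : ℕ} {B : ℤ} {v : Fin n → ℤ} {i i' : Fin n} (h : v i ≤ v i') :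
    w B v i' - w B v i ≤ v i' - v i := by
  have hsub : U B v i' ⊆ U B v i ∪ Finset.Ico (v i) (v i') := by
    intro m hm
    rw [Finset.mem_union, Finset.mem_Ico]
    rw [mem_U] at hm
    obtain ⟨j, h1, h2, h3⟩ := hm
    rcases lt_or_ge m (v i) with hc | hc
    · exact Or.inl (mem_U.mpr ⟨j, h1, h2, hc⟩)
    · exact Or.inr ⟨hc, h3⟩
  have := (Finset.card_le_card hsub).trans (Finset.card_union_le _ _)
  have hIco : (Finset.Ico (v i) (v i')).card = (v i' - v i).toNat := Int.card_Ico _ _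
  rw [hIco] at this
  have hd : ((v i' - v i).toNat : ℤ) = v i' - v i := Int.toNat_of_nonneg (by linarith)
  simp only [w]
  have : ((U B v i').card : ℤ) ≤ (U B v i).card + ((v i' - v i).toNat : ℤ) := by
    exact_mod_cast this
  linarith

lemma w_sub_ge {n : ℕ} {B : ℤ} {v : Fin n → ℤ} (hB : 0 ≤ B) {i i' : Fin n}
    (h : v i ≤ v i') : min B (v i' - v i) ≤ w B v i' - w B v i := by
  set T : Finset ℤ := Finset.Ico (v i) (min (v i + B) (v i')) with hT
  have hTsub : T ⊆ U B v i' := by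
    intro m hm
    rw [hT, Finset.mem_Ico, lt_min_iff] at hm
    exact mem_U.mpr ⟨i, hm.1, hm.2.1, hm.2.2⟩
  have hdisj : Disjoint (U B v i) T := by
    rw [Finset.disjoint_left]
    intro m hm hmT
    rw [mem_U] at hm
    rw [hT, Finset.mem_Ico] at hmT
    obtain ⟨j, _, _, h3⟩ := hm
    exact absurd hmT.1 (not_le.mpr h3)
  have hsub : U B v i ∪ T ⊆ U B v i' := Finset.union_subset (U_subset h) hTsub
  have hcard := Finset.card_le_card hsub
  rw [Finset.card_union_of_disjoint hdisj] at hcard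
  have hTcard : T.card = (min (v i + B) (v i') - v i).toNat := Int.card_Ico _ _
  have hmin : min (v i + B) (v i') - v i = min B (v i' - v i) := by
    rcases le_total (v i + B) (v i') with hc | hc
    · rw [min_eq_left hc, min_eq_left (by linarith)]; ring
    · rw [min_eq_right hc, min_eq_right (by linarith)]
  have hnn : 0 ≤ min B (v i' - v i) := le_min hB (by linarith)
  have hTZ : (T.card : ℤ) = min B (v i' - v i) := by
    rw [hTcard, hmin, Int.toNat_of_nonneg hnn]
  have : ((U B v i).card : ℤ) + (T.card : ℤ) ≤ (U B v i').card := by exact_mod_cast hcard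
  simp only [w]
  linarith

/-- Key: compression preserves truth of bounded comparisons. -/
lemma pair_iff {n : ℕ} {B : ℤ} {v : Fin n → ℤ} (hB : 0 ≤ B) (i j : Fin n)
    (m : ℤ) (hm1 : -B ≤ m) (hm2 : m < B) :
    v i ≤ v j + m ↔ w B v i ≤ w B v j + m := by
  rcases le_total (v j) (v i) with h | h
  · have h1 := w_sub_ge hB h
    have h2 := w_sub_le (B := B) h
    constructor
    · intro hvm; linarith
    · intro hwm
      by_contra hc
      push_neg at hc
      have : m + 1 ≤ min B (v i - v j) := le_min (by linarith) (by linarith)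
      linarith
  · have h1 := w_sub_ge hB h
    have h2 := w_sub_le (B := B) h
    constructor
    · intro hvm
      have : -m ≤ min B (v j - v i) := le_min (by linarith) (by linarith)
      linarith
    · intro hwm; linarith

lemma eval_iff {a : ℕ} {B : ℤ} (q : ℕ) (hBq : B = (q : ℤ) + 1) (φ : QF a)
    (hdeg : φ.DegLe q) (u u' : Fin a → ℤ)
    (h : ∀ i j m, -B ≤ m → m < B → (u i ≤ u j + m ↔ u' i ≤ u' j + m)) :
    φ.eval u ↔ φ.eval u' := by
  induction φ with
  | lt i j k =>
    have hk := abs_le.mp hdeg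
    have := h i j (k - 1) (by omega) (by omega)
    simp only [QF.eval]
    constructor
    · intro hlt; have := this.mp (by linarith); linarith
    · intro hlt; have := this.mpr (by linarith); linarith
  | le i j k =>
    have hk := abs_le.mp hdeg
    exact h i j k (by omega) (by omega)
  | and φ ψ ihφ ihψ =>
    simp only [QF.eval]
    rw [ihφ hdeg.1, ihψ hdeg.2]
  | or φ ψ ihφ ihψ =>
    simp only [QF.eval]
    rw [ihφ hdeg.1, ihψ hdeg.2]
  | not φ ihφ =>
    simp only [QF.eval]
    rw [ihφ hdeg]

lemma w_ge_one {n : ℕ} (B : ℤ) (v : Fin n → ℤ) (i : Fin n) : 1 ≤ w B v i := by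
  simp only [w]
  have := Int.natCast_nonneg (U B v i).card
  linarith

lemma w_le {n : ℕ} (q : ℕ) (hn : 1 ≤ n) (v : Fin n → ℤ) (i : Fin n) :
    w ((q : ℤ) + 1) v i ≤ ((q + 1) * n : ℕ) := by
  set B : ℤ := (q : ℤ) + 1 with hB
  have hcard : (U B v i).card ≤ (n - 1) * (q + 1) := by
    have h1 : (U B v i).card ≤ ∑ j : Fin n, (Finset.Ico (v j) (min (v j + B) (v i))).card :=
      Finset.card_biUnion_le
    have h2 : ∑ j : Fin n, (Finset.Ico (v j) (min (v j + B) (v i))).card =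
        (∑ j ∈ Finset.univ.erase i, (Finset.Ico (v j) (min (v j + B) (v i))).card) +
          (Finset.Ico (v i) (min (v i + B) (v i))).card :=
      (Finset.sum_erase_add _ _ (Finset.mem_univ i)).symm
    have h3 : (Finset.Ico (v i) (min (v i + B) (v i))).card = 0 := by
      rw [Finset.card_eq_zero, Finset.Ico_eq_empty_iff]
      exact fun hc => absurd (min_le_right (v i + B) (v i)) (not_le.mpr hc)
    have h4 : ∀ j ∈ Finset.univ.erase i,
        (Finset.Ico (v j) (min (v j + B) (v i))).card ≤ q + 1 := by
      intro j _
      rw [Int.card_Ico]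
      have : min (v j + B) (v i) - v j ≤ B := by
        have := min_le_left (v j + B) (v i); linarith
      omega
    have h5 : (∑ j ∈ Finset.univ.erase i, (Finset.Ico (v j) (min (v j + B) (v i))).card)
        ≤ (Finset.univ.erase i).card * (q + 1) := by
      calc _ ≤ ∑ _j ∈ Finset.univ.erase i, (q + 1) := Finset.sum_le_sum h4
      _ = (Finset.univ.erase i).card * (q + 1) := by rw [Finset.sum_const, smul_eq_mul]
    have h6 : (Finset.univ.erase i).card = n - 1 := by
      rw [Finset.card_erase_of_mem (Finset.mem_univ i), Finset.card_univ, Fintype.card_fin]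
    rw [h6] at h5
    omega
  have hn1 : ((n - 1 : ℕ) : ℤ) = (n : ℤ) - 1 := by omega
  have hnZ : (1 : ℤ) ≤ (n : ℤ) := by exact_mod_cast hn
  have hcZ : ((U B v i).card : ℤ) ≤ ((n : ℤ) - 1) * ((q : ℤ) + 1) := by
    have h7 := (Nat.cast_le (α := ℤ)).mpr hcard
    push_cast at h7
    rw [hn1] at h7
    linarith
  simp only [w]
  push_cast
  nlinarith [hcZ, hnZ]

end Stmt4Aux

/-- An instance: a conjunction of constraints `R(y₁,…,y_a)` where `R ⊆ ℤ^a` is defined by a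
quantifier-free formula of qe-degree `q` and the `y`'s range over `n` variables. It is
satisfiable over `ℤ` iff it is satisfiable with values in `{1, …, (q+1)·n}`. -/
theorem stmt_4 (a n q : ℕ) (φ : QF a) (hdeg : φ.DegLe q)
    (C : List (Fin a → Fin n)) :
    (∃ v : Fin n → ℤ, ∀ σ ∈ C, φ.eval (v ∘ σ)) ↔
    (∃ v : Fin n → ℤ, (∀ i, 1 ≤ v i ∧ v i ≤ ((q + 1) * n : ℕ)) ∧
      ∀ σ ∈ C, φ.eval (v ∘ σ)) := by
  constructor
  · rintro ⟨v, hv⟩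
    rcases Nat.eq_zero_or_pos n with hn | hn
    · subst hn
      exact ⟨v, fun i => i.elim0, hv⟩
    · set B : ℤ := (q : ℤ) + 1 with hB
      refine ⟨Stmt4Aux.w B v, fun i => ⟨Stmt4Aux.w_ge_one B v i, Stmt4Aux.w_le q hn v i⟩, ?_⟩
      intro σ hσ
      refine (Stmt4Aux.eval_iff q rfl φ hdeg (Stmt4Aux.w B v ∘ σ) (v ∘ σ) ?_).mpr (hv σ hσ)
      intro i j m hm1 hm2
      exact (Stmt4Aux.pair_iff (by positivity) (σ i) (σ j) m hm1 hm2).symm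
  · rintro ⟨v, _, hv⟩
    exact ⟨v, hv⟩
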